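/- For ω₂(x) = (1-x)²/(1-(1-x)²) on (0,1], the function x·ω₂'(x) is increasing in x ∈ (0,1]. -/

import Mathlib

lemma deriv_omega2 (x : ℝ) (hx : x ∈ Set.Ioc (0:ℝ) 1) :
    deriv (fun y => (1 - y) ^ 2 / (1 - (1 - y) ^ 2)) x
      = -2 * (1 - x) / (1 - (1 - x) ^ 2) ^ 2 := by
  have hden : 1 - (1 - x) ^ 2 ≠ 0 := by
    have h1 : 1 - (1 - x) ^ 2 = x * (2 - x) := by ring
    rw [h1]
    have h2 : 0 < x * (2 - x) := by nlinarith [hx.1, hx.2]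
    exact h2.ne'
  have hf : HasDerivAt (fun y : ℝ => (1 - y) ^ 2) (-(2 * (1 - x))) x := by
    have h := ((hasDerivAt_id x).const_sub 1).fun_pow 2
    simpa using h
  have hg : HasDerivAt (fun y : ℝ => 1 - (1 - y) ^ 2) (2 * (1 - x)) x := by
    simpa using hf.const_sub 1
  have h := hf.fun_div hg hden
  rw [h.deriv]
  field_simp
  ring

/-- For `ω₂(x) = (1-x)²/(1-(1-x)²)`, the function `x·ω₂'(x)` is increasing on `(0,1]`. -/
theorem stmt6 :
    MonotoneOn (fun x => x * deriv (fun y => (1 - y) ^ 2 / (1 - (1 - y) ^ 2)) x)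
      (Set.Ioc (0:ℝ) 1) := by
  intro x hx y hy hxy
  simp only
  rw [deriv_omega2 x hx, deriv_omega2 y hy]
  have hx0 := hx.1
  have hx1 := hx.2
  have hy0 := hy.1
  have hy1 := hy.2
  have hdx : (0:ℝ) < 1 - (1 - x) ^ 2 := by nlinarith
  have hdy : (0:ℝ) < 1 - (1 - y) ^ 2 := by nlinarith
  rw [← mul_div_assoc, ← mul_div_assoc, div_le_div_iff₀ (by positivity) (by positivity)]
  have hB : 0 ≤ 4 - 4*x - 4*y + x^2 + y^2 + 5*x*y - x*y*(x+y) := by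
    nlinarith [sq_nonneg (2*x+3*y-4), sq_nonneg (x-y), mul_nonneg (mul_nonneg hx0.le hy0.le) (by nlinarith : (0:ℝ) ≤ 2 - x - y)]
  nlinarith [mul_nonneg (mul_nonneg (mul_nonneg hx0.le hy0.le) (sub_nonneg.2 hxy)) hB]
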